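/- Let L be a lattice in (V, B) and p a prime not dividing det L. Let v ∈ L with v ∉ pL and B(v,v) ∈ p²ℤ. Then L(v) := L_v + ℤ·(v/p), where L_v = {x ∈ L : B(x,v) ∈ pℤ}, is again a lattice in V (in particular B takes integer values on L(v)), and L(v) is a p-neighbor of L. -/

import Mathlib

/-- A (full, integral) ℤ-lattice in a ℚ-quadratic space `(V, B)`: a finitely generated
ℤ-submodule spanning `V` over ℚ on which `B` takes integer values. -/
def IsLatticeIn {V : Type*} [AddCommGroup V] [Module ℚ V]
    (B : LinearMap.BilinForm ℚ V) (L : Submodule ℤ V) : Prop :=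
  L.FG ∧ Submodule.span ℚ (L : Set V) = ⊤ ∧
    ∀ x ∈ L, ∀ y ∈ L, ∃ n : ℤ, B x y = (n : ℚ)

/-- The index `[L : L ∩ L']` of the intersection of two ℤ-submodules in the first one. -/
noncomputable def subIndex {V : Type*} [AddCommGroup V] [Module ℚ V]
    (L L' : Submodule ℤ V) : ℕ :=
  AddSubgroup.relIndex L'.toAddSubgroup L.toAddSubgroup

/-- Two lattices `L, L'` in `V` are `p`-neighbors if `[L : L ∩ L'] = [L' : L ∩ L'] = p`. -/
def IsPNeighbor {V : Type*} [AddCommGroup V] [Module ℚ V] (p : ℕ)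
    (L L' : Submodule ℤ V) : Prop :=
  subIndex L L' = p ∧ subIndex L' L = p

/-- Kneser's neighbor `L(v) = L_v + ℤ·(v/p)` of `L` at the vector `v`, where
`L_v = {x ∈ L : B(x,v) ∈ pℤ}`. -/
noncomputable def neighborLattice {V : Type*} [AddCommGroup V] [Module ℚ V]
    (B : LinearMap.BilinForm ℚ V) (L : Submodule ℤ V) (p : ℕ) (v : V) :
    Submodule ℤ V :=
  (L ⊓ Submodule.comap ((LinearMap.flip B v).restrictScalars ℤ)
      (Submodule.span ℤ {(p : ℚ)})) ⊔ Submodule.span ℤ {((p : ℚ)⁻¹) • v}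

private lemma ratNum_of_int (a : ℚ) (n : ℤ) (h : a = n) : a.num = n := by
  subst h; exact Rat.num_intCast n

section Aux

variable {V : Type*} [AddCommGroup V] [Module ℚ V] [FiniteDimensional ℚ V]
variable (B : LinearMap.BilinForm ℚ V)

/-- Step A: existence of `x₀ ∈ L` with `p ∤ B x₀ v`. -/
private lemma exists_pairing_not_dvd
    (L : Submodule ℤ V) (hL : IsLatticeIn B L)
    (p : ℕ) (hp : p.Prime)
    (hdet : ∃ (b : Module.Basis (Fin (Module.finrank ℚ V)) ℤ L) (d : ℤ),
      Matrix.det (Matrix.of fun i j => B (b i : V) (b j : V)) = (d : ℚ) ∧ ¬ (p : ℤ) ∣ d)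
    (v : V) (hvL : v ∈ L) (hvp : ¬ ∃ w ∈ L, v = (p : ℤ) • w) :
    ∃ x ∈ L, ∃ n : ℤ, B x v = (n : ℚ) ∧ ¬ (p : ℤ) ∣ n := by
  classical
  haveI : Fact p.Prime := ⟨hp⟩
  obtain ⟨b, d, hGd, hpd⟩ := hdet
  have hG : ∀ i j : Fin (Module.finrank ℚ V), ∃ n : ℤ, B (b i : V) (b j : V) = (n : ℚ) :=
    fun i j => hL.2.2 _ (b i).2 _ (b j).2
  choose G hGspec using hG
  set c : Fin (Module.finrank ℚ V) → ℤ := fun i => b.repr ⟨v, hvL⟩ i with hc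
  have hv_sum : ∑ i, c i • (b i : V) = v := by
    have h0 : (∑ i, (b.repr ⟨v, hvL⟩) i • b i : ↥L) = ⟨v, hvL⟩ := b.sum_repr ⟨v, hvL⟩
    calc ∑ i, c i • (b i : V) = ((∑ i, (b.repr ⟨v, hvL⟩) i • b i : ↥L) : V) := by
          push_cast; rfl
      _ = v := by rw [h0]
  -- integer Gram matrix has determinant d
  have hdetZ : (Matrix.of G).det = d := by
    have h1 : (Int.castRingHom ℚ).mapMatrix (Matrix.of G)
        = Matrix.of (fun i j => B (b i : V) (b j : V)) := by
      ext i j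
      simp [hGspec i j]
    have h2 := (RingHom.map_det (Int.castRingHom ℚ) (Matrix.of G)).symm
    rw [h1, hGd] at h2
    rw [eq_intCast] at h2
    exact_mod_cast h2.symm
  -- key: some row pairing is not divisible by p
  have key : ∃ i, ¬ (p : ℤ) ∣ ∑ j, G i j * c j := by
    by_contra hcon
    push_neg at hcon
    set Gp : Matrix (Fin (Module.finrank ℚ V)) (Fin (Module.finrank ℚ V)) (ZMod p) :=
      (Int.castRingHom (ZMod p)).mapMatrix (Matrix.of G) with hGp
    have hdetGp : Gp.det = ((d : ℤ) : ZMod p) := by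
      rw [hGp, ← RingHom.map_det, hdetZ]; rfl
    have hdne : Gp.det ≠ 0 := by
      rw [hdetGp]
      simpa [ZMod.intCast_zmod_eq_zero_iff_dvd] using hpd
    haveI := Matrix.invertibleOfIsUnitDet Gp (isUnit_iff_ne_zero.mpr hdne)
    have hmv : Gp.mulVec (fun j => ((c j : ℤ) : ZMod p)) = 0 := by
      funext i
      have : ((∑ j, G i j * c j : ℤ) : ZMod p) = 0 :=
        (ZMod.intCast_zmod_eq_zero_iff_dvd _ _).mpr (by exact_mod_cast hcon i)
      calc Gp.mulVec (fun j => ((c j : ℤ) : ZMod p)) i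
          = ∑ j, ((G i j : ℤ) : ZMod p) * ((c j : ℤ) : ZMod p) := by
            simp [Matrix.mulVec, dotProduct, hGp]
        _ = ((∑ j, G i j * c j : ℤ) : ZMod p) := by push_cast; ring
        _ = 0 := this
    have hc0 : (fun j => ((c j : ℤ) : ZMod p)) = 0 := by
      have h3 := congrArg (fun w => (⅟Gp).mulVec w) hmv
      simpa [Matrix.mulVec_mulVec, invOf_mul_self, Matrix.one_mulVec] using h3
    have hall : ∀ j, (p : ℤ) ∣ c j := fun j =>
      (ZMod.intCast_zmod_eq_zero_iff_dvd _ _).mp (congrFun hc0 j)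
    choose e he using hall
    refine hvp ⟨∑ j, e j • (b j : V), Submodule.sum_mem _ fun j _ =>
      Submodule.smul_mem _ _ (b j).2, ?_⟩
    rw [← hv_sum]
    rw [Finset.smul_sum]
    refine Finset.sum_congr rfl fun j _ => ?_
    rw [he j, mul_smul]
  obtain ⟨i, hi⟩ := key
  refine ⟨(b i : V), (b i).2, ∑ j, G i j * c j, ?_, hi⟩
  have : B (b i : V) v = ∑ j, (c j : ℚ) * ((G i j : ℤ) : ℚ) := by
    rw [← hv_sum, map_sum]
    refine Finset.sum_congr rfl fun j _ => ?_
    rw [map_zsmul, zsmul_eq_mul, hGspec]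
  rw [this]
  push_cast
  exact Finset.sum_congr rfl fun j _ => mul_comm _ _

end Aux
/-- if `p ∤ det L`, `v ∈ L \ pL` and `B(v,v) ∈ p²ℤ`, then
`L(v) = L_v + ℤ·(v/p)` is again a lattice in `V` and is a `p`-neighbor of `L`. -/
theorem neighborLattice_isLattice_and_pNeighbor {V : Type*} [AddCommGroup V]
    [Module ℚ V] [FiniteDimensional ℚ V] (B : LinearMap.BilinForm ℚ V)
    (hBnd : B.Nondegenerate) (hBsymm : B.IsSymm)
    (L : Submodule ℤ V) (hL : IsLatticeIn B L)
    (p : ℕ) (hp : p.Prime)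
    (hdet : ∃ (b : Module.Basis (Fin (Module.finrank ℚ V)) ℤ L) (d : ℤ),
      Matrix.det (Matrix.of fun i j => B (b i : V) (b j : V)) = (d : ℚ) ∧ ¬ (p : ℤ) ∣ d)
    (v : V) (hvL : v ∈ L) (hvp : ¬ ∃ w ∈ L, v = (p : ℤ) • w)
    (hvv : ∃ n : ℤ, B v v = (p : ℚ) ^ 2 * (n : ℚ)) :
    IsLatticeIn B (neighborLattice B L p v) ∧ IsPNeighbor p L (neighborLattice B L p v) := by
  classical
  haveI : Fact p.Prime := ⟨hp⟩
  have hp0 : (p : ℚ) ≠ 0 := Nat.cast_ne_zero.mpr hp.pos.ne'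
  have hint : ∀ x ∈ L, ∀ y ∈ L, ∃ n : ℤ, B x y = (n : ℚ) := hL.2.2
  have hsym : ∀ x y : V, B x y = B y x := fun x y => by simpa using hBsymm.eq x y
  obtain ⟨x0, hx0L, n0, hx0v, hn0⟩ := exists_pairing_not_dvd B L hL p hp hdet v hvL hvp
  have hn0ne : ((n0 : ℤ) : ZMod p) ≠ 0 := by
    simpa [ZMod.intCast_zmod_eq_zero_iff_dvd] using hn0
  set Lv : Submodule ℤ V := L ⊓ Submodule.comap ((LinearMap.flip B v).restrictScalars ℤ)
      (Submodule.span ℤ {(p : ℚ)}) with hLvdef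
  set u : V := (p : ℚ)⁻¹ • v with hudef
  set L' : Submodule ℤ V := neighborLattice B L p v with hL'set
  have hL'def : L' = Lv ⊔ Submodule.span ℤ {u} := rfl
  -- membership in Lv
  have mem_Lv : ∀ x : V, x ∈ Lv ↔ x ∈ L ∧ ∃ n : ℤ, B x v = (p : ℚ) * n := by
    intro x
    simp only [hLvdef, Submodule.mem_inf, Submodule.mem_comap,
      LinearMap.coe_restrictScalars, LinearMap.flip_apply, Submodule.mem_span_singleton]
    constructor
    · rintro ⟨h1, n, h2⟩; exact ⟨h1, n, by rw [← h2, zsmul_eq_mul]; ring⟩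
    · rintro ⟨h1, n, h2⟩; exact ⟨h1, n, by rw [h2, zsmul_eq_mul]; ring⟩
  have hLvL : Lv ≤ L := inf_le_left
  have hvLv : v ∈ Lv := by
    obtain ⟨n, hn⟩ := hvv
    exact (mem_Lv v).mpr ⟨hvL, p * n, by rw [hn]; push_cast; ring⟩
  have hpu : (p : ℤ) • u = v := by
    rw [← Int.cast_smul_eq_zsmul ℚ, hudef, smul_smul]
    push_cast
    rw [mul_inv_cancel₀ hp0, one_smul]
  -- decomposition of elements of L'
  have mem_L' : ∀ x : V, x ∈ L' ↔ ∃ y ∈ Lv, ∃ k : ℤ, x = y + k • u := by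
    intro x
    rw [hL'def, Submodule.mem_sup]
    constructor
    · rintro ⟨y, hy, z, hz, rfl⟩
      obtain ⟨k, rfl⟩ := Submodule.mem_span_singleton.mp hz
      exact ⟨y, hy, k, rfl⟩
    · rintro ⟨y, hy, k, rfl⟩
      exact ⟨y, hy, k • u, Submodule.mem_span_singleton.mpr ⟨k, rfl⟩, rfl⟩
  -- if k • u ∈ L then p ∣ k
  have hdivk : ∀ k : ℤ, k • u ∈ L → (p : ℤ) ∣ k := by
    intro k hk
    by_contra hnd
    have hcop : IsCoprime ((p : ℕ) : ℤ) k := by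
      rw [Int.isCoprime_iff_gcd_eq_one]
      have h2 : ¬ p ∣ k.natAbs := fun hd => hnd (Int.natAbs_dvd_natAbs.mp (by simpa using hd))
      simpa [Int.gcd] using hp.coprime_iff_not_dvd.mpr h2
    obtain ⟨a, b, hab⟩ := hcop
    refine hvp ⟨a • v + b • (k • u),
      Submodule.add_mem _ (Submodule.smul_mem _ _ hvL) (Submodule.smul_mem _ _ hk), ?_⟩
    have hv1 : v = (a * (p : ℤ) + b * k) • v := by rw [hab, one_smul]
    calc v = (a * (p : ℤ) + b * k) • v := hv1
      _ = (p : ℤ) • (a • v + b • k • u) := by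
          rw [← hpu]
          module
  -- L ∩ L' = Lv
  have hLinfL' : ∀ x : V, x ∈ L → x ∈ L' → x ∈ Lv := by
    intro x hxL hxL'
    obtain ⟨y, hy, k, rfl⟩ := (mem_L' _).mp hxL'
    have hku : k • u ∈ L := by
      have h : k • u = (y + k • u) - y := by abel
      rw [h]; exact Submodule.sub_mem _ hxL (hLvL hy)
    obtain ⟨m, rfl⟩ := hdivk k hku
    have h2 : ((p : ℤ) * m) • u = m • v := by rw [mul_comm, mul_smul, hpu]
    rw [h2]
    exact Submodule.add_mem _ hy (Submodule.smul_mem _ _ hvLv)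
  -- integrality helpers
  have hBuint : ∀ y ∈ Lv, ∃ m : ℤ, B y u = (m : ℚ) := by
    intro y hy
    obtain ⟨-, m, hm⟩ := (mem_Lv y).mp hy
    refine ⟨m, ?_⟩
    rw [hudef, map_smul, smul_eq_mul, hm]
    field_simp
  have hBux0 : B u x0 = (p : ℚ)⁻¹ * n0 := by
    rw [hudef, map_smul, LinearMap.smul_apply, smul_eq_mul, hsym v x0, hx0v]
  have hBuu : ∃ m : ℤ, B u u = (m : ℚ) := by
    obtain ⟨n, hn⟩ := hvv
    refine ⟨n, ?_⟩
    have h4 : B u u = (p : ℚ)⁻¹ * ((p : ℚ)⁻¹ * B v v) := by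
      simp only [hudef, map_smul, LinearMap.smul_apply, smul_eq_mul]
    rw [h4, hn, pow_two]
    field_simp
  -- integrality of B on L'
  have hBint' : ∀ x ∈ L', ∀ y ∈ L', ∃ n : ℤ, B x y = (n : ℚ) := by
    intro x hx y hy
    obtain ⟨a, ha, k, rfl⟩ := (mem_L' x).mp hx
    obtain ⟨c, hc, l, rfl⟩ := (mem_L' y).mp hy
    obtain ⟨n1, hn1⟩ := hint a (hLvL ha) c (hLvL hc)
    obtain ⟨m1, hm1⟩ := hBuint a ha
    obtain ⟨m2, hm2⟩ := hBuint c hc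
    obtain ⟨m3, hm3⟩ := hBuu
    have hm2' : B u c = (m2 : ℚ) := by rw [hsym u c, hm2]
    refine ⟨n1 + l * m1 + k * m2 + k * (l * m3), ?_⟩
    simp only [map_add, LinearMap.add_apply, map_zsmul, LinearMap.smul_apply,
      zsmul_eq_mul]
    rw [hn1, hm1, hm2', hm3]
    push_cast
    ring
  -- finite generation
  have hFG : L'.FG := by
    haveI : Module.Finite ℤ ↥L := Module.Finite.iff_fg.mpr hL.1
    haveI : IsNoetherian ℤ ↥L := isNoetherian_of_isNoetherianRing_of_finite ℤ ↥L
    have h1 : (Submodule.comap L.subtype Lv).FG := IsNoetherian.noetherian _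
    have h2 : Lv.FG := by
      have h3 := h1.map L.subtype
      rwa [Submodule.map_comap_subtype, inf_eq_right.mpr hLvL] at h3
    rw [hL'def]
    exact h2.sup (Submodule.fg_span_singleton _)
  -- spans V over ℚ
  have hspan : Submodule.span ℚ (L' : Set V) = ⊤ := by
    have hsub : (L : Set V) ⊆ (Submodule.span ℚ (L' : Set V) : Set V) := by
      intro x hx
      obtain ⟨n, hn⟩ := hint x hx v hvL
      have h1 : (p : ℤ) • x ∈ Lv := by
        refine (mem_Lv _).mpr ⟨Submodule.smul_mem _ _ hx, n, ?_⟩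
        rw [map_zsmul, LinearMap.smul_apply, hn, zsmul_eq_mul]
        push_cast; ring
      have h2 : ((p : ℤ) • x : V) ∈ Submodule.span ℚ (L' : Set V) :=
        Submodule.subset_span (by rw [hL'def]; exact Submodule.mem_sup_left h1)
      have h3 : x = (p : ℚ)⁻¹ • ((p : ℤ) • x) := by
        rw [← Int.cast_smul_eq_zsmul ℚ, smul_smul]
        push_cast
        rw [inv_mul_cancel₀ hp0, one_smul]
      rw [h3]
      exact Submodule.smul_mem _ _ h2
    rw [eq_top_iff, ← hL.2.1]
    exact Submodule.span_le.mpr hsub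
  -- helper coercion facts
  have memL : ∀ x : ↥L.toAddSubgroup, (x : V) ∈ L := fun x => x.2
  have memL' : ∀ x : ↥L'.toAddSubgroup, (x : V) ∈ L' := fun x => x.2
  -- the homomorphism f : L →+ ZMod p, x ↦ B x v mod p
  set f : L.toAddSubgroup →+ ZMod p := AddMonoidHom.mk'
    (fun x => (((B (x : V) v).num : ℤ) : ZMod p)) (by
      intro x y
      obtain ⟨n, hn⟩ := hint _ (memL x) v hvL
      obtain ⟨m, hm⟩ := hint _ (memL y) v hvL
      have hxy : B ((x + y : ↥L.toAddSubgroup) : V) v = ((n + m : ℤ) : ℚ) := by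
        rw [AddSubgroup.coe_add, map_add, LinearMap.add_apply, hn, hm]
        push_cast; ring
      rw [ratNum_of_int _ _ hxy, ratNum_of_int _ _ hn, ratNum_of_int _ _ hm]
      push_cast; ring) with hfdef
  have hker : f.ker = L'.toAddSubgroup.addSubgroupOf L.toAddSubgroup := by
    ext x
    rw [AddMonoidHom.mem_ker, AddSubgroup.mem_addSubgroupOf]
    obtain ⟨n, hn⟩ := hint _ (memL x) v hvL
    have hfx : f x = ((n : ℤ) : ZMod p) := by
      show (((B (x : V) v).num : ℤ) : ZMod p) = _
      rw [ratNum_of_int _ _ hn]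
    rw [hfx, Submodule.mem_toAddSubgroup]
    constructor
    · intro h0
      obtain ⟨m, hm⟩ := (ZMod.intCast_zmod_eq_zero_iff_dvd _ _).mp h0
      have hmem : (x : V) ∈ Lv :=
        (mem_Lv _).mpr ⟨memL x, m, by rw [hn, hm]; push_cast; ring⟩
      rw [hL'def]
      exact Submodule.mem_sup_left hmem
    · intro hmem
      have hxLv : (x : V) ∈ Lv := hLinfL' _ (memL x) hmem
      obtain ⟨-, m, hm⟩ := (mem_Lv _).mp hxLv
      have hnm : n = (p : ℤ) * m := by
        have : ((n : ℤ) : ℚ) = (((p : ℤ) * m : ℤ) : ℚ) := by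
          rw [← hn, hm]; push_cast; ring
        exact_mod_cast this
      rw [hnm]
      exact (ZMod.intCast_zmod_eq_zero_iff_dvd _ _).mpr ⟨m, rfl⟩
  have hfsurj : Function.Surjective f := by
    intro t
    obtain ⟨k, hk⟩ := ZMod.intCast_surjective (t * (((n0 : ℤ) : ZMod p))⁻¹)
    refine ⟨⟨k • x0, (Submodule.mem_toAddSubgroup _).mpr (Submodule.smul_mem _ _ hx0L)⟩, ?_⟩
    have hBk : B (k • x0 : V) v = ((k * n0 : ℤ) : ℚ) := by
      rw [map_zsmul, LinearMap.smul_apply, hx0v, zsmul_eq_mul]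
      push_cast; ring
    show (((B (k • x0 : V) v).num : ℤ) : ZMod p) = t
    rw [ratNum_of_int _ _ hBk]
    push_cast
    rw [hk, mul_assoc, inv_mul_cancel₀ hn0ne, mul_one]
  have hidx1 : subIndex L L' = p := by
    have h0 : subIndex L L' = (L'.toAddSubgroup.addSubgroupOf L.toAddSubgroup).index := rfl
    rw [h0, ← hker, AddSubgroup.index_ker, AddMonoidHom.range_eq_top.mpr hfsurj]
    rw [Nat.card_congr AddSubgroup.topEquiv.toEquiv, Nat.card_zmod]
  -- the homomorphism g : L' →+ ZMod p, x ↦ p * B x x0 mod p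
  have hgrep : ∀ x : ↥L'.toAddSubgroup, ∃ (y : V) (m k : ℤ), y ∈ Lv ∧ (x : V) = y + k • u ∧
      (p : ℚ) * B (x : V) x0 = (((p : ℤ) * m + k * n0 : ℤ) : ℚ) := by
    intro x
    obtain ⟨y, hy, k, hxeq⟩ := (mem_L' _).mp (memL' x)
    obtain ⟨m, hm⟩ := hint y (hLvL hy) x0 hx0L
    refine ⟨y, m, k, hy, hxeq, ?_⟩
    rw [hxeq, map_add, LinearMap.add_apply, map_zsmul, LinearMap.smul_apply, hm, hBux0,
      zsmul_eq_mul]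
    push_cast
    field_simp
  set g : L'.toAddSubgroup →+ ZMod p := AddMonoidHom.mk'
    (fun x => ((((p : ℚ) * B (x : V) x0).num : ℤ) : ZMod p)) (by
      intro x y
      obtain ⟨_, m1, k1, _, _, h1⟩ := hgrep x
      obtain ⟨_, m2, k2, _, _, h2⟩ := hgrep y
      have hxy : (p : ℚ) * B ((x + y : ↥L'.toAddSubgroup) : V) x0
          = (((p : ℤ) * m1 + k1 * n0 + ((p : ℤ) * m2 + k2 * n0) : ℤ) : ℚ) := by
        rw [AddSubgroup.coe_add, map_add, LinearMap.add_apply, mul_add, h1, h2]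
        push_cast; ring
      rw [ratNum_of_int _ _ hxy, ratNum_of_int _ _ h1, ratNum_of_int _ _ h2]
      push_cast; ring) with hgdef
  have hkerg : g.ker = L.toAddSubgroup.addSubgroupOf L'.toAddSubgroup := by
    ext x
    rw [AddMonoidHom.mem_ker, AddSubgroup.mem_addSubgroupOf, Submodule.mem_toAddSubgroup]
    obtain ⟨y, m, k, hy, hxeq, hval⟩ := hgrep x
    have hgx : g x = ((((p : ℤ) * m + k * n0 : ℤ)) : ZMod p) := by
      show ((((p : ℚ) * B (x : V) x0).num : ℤ) : ZMod p) = _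
      rw [ratNum_of_int _ _ hval]
    rw [hgx]
    constructor
    · intro h0
      have hdvd : (p : ℤ) ∣ ((p : ℤ) * m + k * n0) :=
        (ZMod.intCast_zmod_eq_zero_iff_dvd _ _).mp h0
      have h1 : (p : ℤ) ∣ k * n0 := (dvd_add_right ⟨m, rfl⟩).mp hdvd
      have hdk : (p : ℤ) ∣ k := ((Nat.prime_iff_prime_int.mp hp).dvd_mul.mp h1).resolve_right hn0
      obtain ⟨k', rfl⟩ := hdk
      rw [hxeq]
      have h2 : ((p : ℤ) * k') • u = k' • v := by rw [mul_comm, mul_smul, hpu]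
      rw [h2]
      exact Submodule.add_mem _ (hLvL hy) (Submodule.smul_mem _ _ hvL)
    · intro hxL
      have hxLv : (x : V) ∈ Lv := hLinfL' _ hxL (memL' x)
      obtain ⟨m', hm'⟩ := hint _ (hLvL hxLv) x0 hx0L
      have h3 : ((p : ℤ) * m + k * n0 : ℤ) = (p : ℤ) * m' := by
        have : (((p : ℤ) * m + k * n0 : ℤ) : ℚ) = (((p : ℤ) * m' : ℤ) : ℚ) := by
          rw [← hval, hm']; push_cast; ring
        exact_mod_cast this
      rw [h3]
      exact (ZMod.intCast_zmod_eq_zero_iff_dvd _ _).mpr ⟨m', rfl⟩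
  have huL' : u ∈ L' := by
    rw [hL'def]
    exact Submodule.mem_sup_right (Submodule.mem_span_singleton_self u)
  have hgsurj : Function.Surjective g := by
    intro t
    obtain ⟨k, hk⟩ := ZMod.intCast_surjective (t * (((n0 : ℤ) : ZMod p))⁻¹)
    refine ⟨⟨k • u, (Submodule.mem_toAddSubgroup _).mpr (Submodule.smul_mem _ _ huL')⟩, ?_⟩
    have hval : (p : ℚ) * B (k • u : V) x0 = ((k * n0 : ℤ) : ℚ) := by
      rw [map_zsmul, LinearMap.smul_apply, hBux0, zsmul_eq_mul]
      push_cast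
      field_simp
    show ((((p : ℚ) * B (k • u : V) x0).num : ℤ) : ZMod p) = t
    rw [ratNum_of_int _ _ hval]
    push_cast
    rw [hk, mul_assoc, inv_mul_cancel₀ hn0ne, mul_one]
  have hidx2 : subIndex L' L = p := by
    have h0 : subIndex L' L = (L.toAddSubgroup.addSubgroupOf L'.toAddSubgroup).index := rfl
    rw [h0, ← hkerg, AddSubgroup.index_ker, AddMonoidHom.range_eq_top.mpr hgsurj]
    rw [Nat.card_congr AddSubgroup.topEquiv.toEquiv, Nat.card_zmod]
  exact ⟨⟨hFG, hspan, hBint'⟩, hidx1, hidx2⟩
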